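/- Input causality is undisturbed: let g : B → C be an affine-stable map with stable family G = { y ∥ z : g(y) ⊒_C z }. Then for any y ∥ z ∈ G and b, b' ∈ y, the event (1,b') is below (1,b) in the induced causal order on y ∥ z if and only if b' ≤_B b. Consequently the first component of the strategy g_! (its projection to B⊥) is partial rigid. -/

import Mathlib

universe u v w

/-- An event structure `(E, ≤, Con)`. -/
structure ES (E : Type u) where
  le : E → E → Prop
  le_refl : ∀ e, le e e
  le_trans : ∀ {a b c}, le a b → le b c → le a c
  le_antisymm : ∀ {a b}, le a b → le b a → a = b
  finitary : ∀ e, Set.Finite {e' | le e' e}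
  Con : Set E → Prop
  con_finite : ∀ {X}, Con X → X.Finite
  con_empty : Con ∅
  con_singleton : ∀ e, Con {e}
  con_mono : ∀ {X Y : Set E}, Y ⊆ X → Con X → Con Y
  con_extend : ∀ {X : Set E} {e e'}, Con X → le e e' → e' ∈ X → Con (insert e X)

namespace ES

variable {E : Type u}

/-- A configuration: consistent and down-closed. -/
def Config (S : ES E) (x : Set E) : Prop :=
  (∀ X : Set E, X ⊆ x → X.Finite → S.Con X) ∧
  ∀ ⦃e e' : E⦄, S.le e' e → e ∈ x → e' ∈ x

/-- The down-closure `[e]` of an event. -/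
def downCl (S : ES E) (e : E) : Set E := {e' | S.le e' e}

/-- The concurrency relation. -/
def Co (S : ES E) (e e' : E) : Prop :=
  S.Con {e, e'} ∧ ¬ S.le e e' ∧ ¬ S.le e' e

end ES

/-- The covering (immediate dependency) relation of an order. -/
def Covers {α : Type u} (le : α → α → Prop) (a b : α) : Prop :=
  a ≠ b ∧ le a b ∧ ∀ c, le a c → le c b → c = a ∨ c = b

/-- An event structure with polarity (`true` = Player `+`, `false` = Opponent `−`). -/
structure Game (E : Type u) extends ES E where
  pol : E → Bool

namespace Game

variable {E : Type u} {E' : Type v}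

def Config (G : Game E) : Set E → Prop := G.toES.Config

/-- The dual game: polarities reversed. -/
def dual (G : Game E) : Game E := { toES := G.toES, pol := fun e => !G.pol e }

/-- The Scott order: `y ⊑ x` iff `y⁻ ⊇ x⁻` and `y⁺ ⊆ x⁺`. -/
def ScottLE (G : Game E) (y x : Set E) : Prop :=
  {e | e ∈ x ∧ G.pol e = false} ⊆ {e | e ∈ y ∧ G.pol e = false} ∧
  {e | e ∈ y ∧ G.pol e = true} ⊆ {e | e ∈ x ∧ G.pol e = true}

/-- `x ⊆⁻ y` : inclusion with only Opponent events intervening. -/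
def subNeg (G : Game E) (x y : Set E) : Prop :=
  x ⊆ y ∧ ∀ e ∈ y, e ∉ x → G.pol e = false

/-- `x ⊆⁺ y` : inclusion with only Player events intervening. -/
def subPos (G : Game E) (x y : Set E) : Prop :=
  x ⊆ y ∧ ∀ e ∈ y, e ∉ x → G.pol e = true

/-- Race-freeness of a game. -/
def RaceFree (G : Game E) : Prop :=
  ∀ x y z, G.Config x → G.Config y → G.Config z →
    G.subNeg x y → G.subPos x z → G.Config (y ∪ z)

end Game

section StableFamilies

variable {E : Type u}

/-- A subset of a family is compatible when some member of the family bounds it. -/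
def FamCompatible (F : Set (Set E)) (Z : Set (Set E)) : Prop :=
  ∃ u ∈ F, ∀ z ∈ Z, z ⊆ u

/-- Stable families: complete, stable, finitary and coincidence-free. -/
def IsStableFamily (F : Set (Set E)) : Prop :=
  F.Nonempty ∧
  (∀ Z ⊆ F, (∀ W ⊆ Z, W.Finite → FamCompatible F W) → ⋃₀ Z ∈ F) ∧
  (∀ Z ⊆ F, Z.Nonempty → FamCompatible F Z → ⋂₀ Z ∈ F) ∧
  (∀ x ∈ F, ∀ e ∈ x, ∃ x₀ ∈ F, x₀.Finite ∧ e ∈ x₀ ∧ x₀ ⊆ x) ∧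
  (∀ x ∈ F, ∀ e ∈ x, ∀ e' ∈ x, e ≠ e' →
    ∃ x₀ ∈ F, x₀ ⊆ x ∧ (e ∈ x₀ ↔ e' ∉ x₀))

/-- The prime configuration `[e]_x` of `e` in `x`. -/
def primeConfig (F : Set (Set E)) (e : E) (x : Set E) : Set E :=
  ⋂₀ {y | y ∈ F ∧ e ∈ y ∧ y ⊆ x}

/-- The primes of a family. -/
def IsPrime (F : Set (Set E)) (p : Set E) : Prop :=
  ∃ e x, x ∈ F ∧ e ∈ x ∧ p = primeConfig F e x

end StableFamilies

section Par

variable {E : Type u} {E' : Type v}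

/-- Configurations of a parallel composition `A ∥ B` (componentwise). -/
def parConfig (A : Game E) (B : Game E') (w : Set (E ⊕ E')) : Prop :=
  A.Config (Sum.inl ⁻¹' w) ∧ B.Config (Sum.inr ⁻¹' w)

/-- Causal dependency of `A ∥ B` (componentwise). -/
def parLE (A : Game E) (B : Game E') : (E ⊕ E') → (E ⊕ E') → Prop :=
  Sum.LiftRel A.le B.le

/-- Polarity of `A⊥ ∥ B`. -/
def parPolL (A : Game E) (B : Game E') : E ⊕ E' → Bool
  | .inl a => !A.pol a
  | .inr b => B.pol b

end Par


section AffineStable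

variable {E : Type u} {E' : Type v} {E'' : Type w}

/-- Affine-stable maps between games. -/
def IsAffineStable (A : Game E) (B : Game E') (f : Set E → Set E') : Prop :=
  (∀ x, A.Config x → B.Config (f x)) ∧
  (∀ x y, A.Config x → A.Config y → A.subNeg x y → B.subNeg (f x) (f y)) ∧
  (∀ x y, A.Config x → A.Config y → A.subPos x y → B.subPos (f x) (f y)) ∧
  (∀ x, A.Config x → ∀ b ∈ f x, B.pol b = true →
    ∃ x₀, A.Config x₀ ∧ x₀.Finite ∧ x₀ ⊆ x ∧ b ∈ f x₀) ∧
  (∀ x, A.Config x → x.Finite → {b | b ∈ f x ∧ B.pol b = false}.Finite) ∧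
  (∀ I : Set (Set E), (∀ x ∈ I, A.Config x) →
    (∃ u, A.Config u ∧ ∀ x ∈ I, x ⊆ u) →
    B.subPos (⋃₀ (f '' I)) (f (⋃₀ I))) ∧
  (∀ I : Set (Set E), I.Nonempty → (∀ x ∈ I, A.Config x) →
    (∃ u, A.Config u ∧ ∀ x ∈ I, x ⊆ u) →
    B.subNeg (f (⋂₀ I)) (⋂₀ (f '' I)))

/-- The stable family `{ x ∥ y : y ⊑_B f(x) }` of an affine-stable map. -/
def affFamily (A : Game E) (B : Game E') (f : Set E → Set E') :
    Set (Set (E ⊕ E')) :=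
  {w | ∃ x y, A.Config x ∧ B.Config y ∧ B.ScottLE y (f x) ∧
    w = Sum.inl '' x ∪ Sum.inr '' y}

end AffineStable

/-- `e' ≤_v e` in the causal order induced on `v` by a family `F`. -/
def belowIn {X : Type u} (F : Set (Set X)) (v : Set X) (e' e : X) : Prop :=
  ∀ w ∈ F, w ⊆ v → e ∈ w → e' ∈ w

section Aux

variable {E' : Type v} {E'' : Type w}

lemma config_sInter' {E : Type u} {S : ES E} {Z : Set (Set E)} (hne : Z.Nonempty)
    (h : ∀ x ∈ Z, S.Config x) : S.Config (⋂₀ Z) := by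
  obtain ⟨x0, hx0⟩ := hne
  constructor
  · intro X hX hXf
    exact (h x0 hx0).1 X (hX.trans (Set.sInter_subset_of_mem hx0)) hXf
  · intro e e' hle he
    exact Set.mem_sInter.mpr fun t ht => (h t ht).2 hle (Set.mem_sInter.mp he t ht)

lemma downCl_config' {E : Type u} {S : ES E} {x : Set E} (hx : S.Config x) {b : E}
    (hb : b ∈ x) : S.Config {e | S.le e b} := by
  constructor
  · intro X hX hXf
    exact hx.1 X (fun e he => hx.2 (hX he) hb) hXf
  · intro e e' hle he
    exact S.le_trans hle he

lemma sum_decomp (w : Set (E' ⊕ E'')) :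
    Sum.inl '' (Sum.inl ⁻¹' w) ∪ Sum.inr '' (Sum.inr ⁻¹' w) = w := by
  ext e
  cases e with
  | inl a => simp
  | inr b => simp

lemma mem_affFamily_iff (B : Game E') (C : Game E'') (g : Set E' → Set E'')
    (w : Set (E' ⊕ E'')) :
    w ∈ affFamily B C g ↔
      B.Config (Sum.inl ⁻¹' w) ∧ C.Config (Sum.inr ⁻¹' w) ∧
        C.ScottLE (Sum.inr ⁻¹' w) (g (Sum.inl ⁻¹' w)) := by
  constructor
  · rintro ⟨x, y, hx, hy, hs, rfl⟩
    have hxe : Sum.inl ⁻¹' (Sum.inl '' x ∪ Sum.inr '' y) = x := by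
      ext a; simp
    have hye : Sum.inr ⁻¹' (Sum.inl '' x ∪ Sum.inr '' y) = y := by
      ext a; simp
    rw [hxe, hye]; exact ⟨hx, hy, hs⟩
  · rintro ⟨h1, h2, h3⟩
    exact ⟨_, _, h1, h2, h3, (sum_decomp w).symm⟩

lemma affFamily_sInter (B : Game E') (C : Game E'') (g : Set E' → Set E'')
    (hg : IsAffineStable B C g) (Z : Set (Set (E' ⊕ E''))) (hne : Z.Nonempty)
    (hZ : Z ⊆ affFamily B C g) (u : Set E') (hu : B.Config u)
    (hb : ∀ w ∈ Z, Sum.inl ⁻¹' w ⊆ u) :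
    ⋂₀ Z ∈ affFamily B C g := by
  have hmemw : ∀ w ∈ Z, B.Config (Sum.inl ⁻¹' w) ∧ C.Config (Sum.inr ⁻¹' w) ∧
      C.ScottLE (Sum.inr ⁻¹' w) (g (Sum.inl ⁻¹' w)) :=
    fun w hw => (mem_affFamily_iff B C g w).mp (hZ hw)
  set I : Set (Set E') := (fun w => Sum.inl ⁻¹' w) '' Z with hI
  have hIl : Sum.inl ⁻¹' (⋂₀ Z) = ⋂₀ I := by
    ext a; simp [hI]
  have hIr : Sum.inr ⁻¹' (⋂₀ Z) = ⋂₀ ((fun w => Sum.inr ⁻¹' w) '' Z) := by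
    ext a; simp
  rw [mem_affFamily_iff, hIl, hIr]
  have hIcfg : ∀ x ∈ I, B.Config x := by
    rintro x ⟨w, hw, rfl⟩; exact (hmemw w hw).1
  have hIne : I.Nonempty := hne.image _
  refine ⟨config_sInter' hIne hIcfg,
    config_sInter' (hne.image _) (by rintro x ⟨w, hw, rfl⟩; exact (hmemw w hw).2.1), ?_⟩
  have hcont := hg.2.2.2.2.2.2 I hIne hIcfg
    ⟨u, hu, by rintro x ⟨w, hw, rfl⟩; exact hb w hw⟩
  constructor
  · rintro c ⟨hc, hcpol⟩
    have hc' : c ∈ ⋂₀ (g '' I) := hcont.1 hc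
    refine ⟨Set.mem_sInter.mpr ?_, hcpol⟩
    rintro t ⟨s, hs, rfl⟩
    exact ((hmemw s hs).2.2.1 ⟨Set.mem_sInter.mp hc' _ ⟨_, ⟨s, hs, rfl⟩, rfl⟩, hcpol⟩).1
  · rintro c ⟨hc, hcpol⟩
    refine ⟨?_, hcpol⟩
    have hc' : c ∈ ⋂₀ (g '' I) := by
      refine Set.mem_sInter.mpr ?_
      rintro t ⟨x, ⟨s, hs, rfl⟩, rfl⟩
      exact ((hmemw s hs).2.2.2 ⟨Set.mem_sInter.mp hc _ ⟨s, hs, rfl⟩, hcpol⟩).1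
    by_contra hnc
    have := hcont.2 c hc' hnc
    rw [hcpol] at this
    simp at this

lemma primeConfig_mem (B : Game E') (C : Game E'') (g : Set E' → Set E'')
    (hg : IsAffineStable B C g) {x : Set (E' ⊕ E'')} {e : E' ⊕ E''}
    (hx : x ∈ affFamily B C g) (he : e ∈ x) :
    primeConfig (affFamily B C g) e x ∈ affFamily B C g := by
  refine affFamily_sInter B C g hg _ ⟨x, hx, he, subset_rfl⟩
    (fun w hw => hw.1) (Sum.inl ⁻¹' x) ((mem_affFamily_iff B C g x).mp hx).1 ?_
  rintro w ⟨_, _, hwx⟩ a ha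
  exact hwx ha

lemma part1_lemma (B : Game E') (C : Game E'') (g : Set E' → Set E'')
    (hg : IsAffineStable B C g) {y : Set E'} {z : Set E''}
    (hy : B.Config y) (hz : C.Config z) (hs : C.ScottLE z (g y))
    {b : E'} (hb : b ∈ y) {b' : E'} (hb' : b' ∈ y) :
    belowIn (affFamily B C g) (Sum.inl '' y ∪ Sum.inr '' z)
      (Sum.inl b') (Sum.inl b) ↔ B.le b' b := by
  constructor
  · intro h
    set y₁ : Set E' := {e | B.le e b} with hy₁def
    have hy₁ : B.Config y₁ := downCl_config' hy hb
    have hy₁y : y₁ ⊆ y := fun e he => hy.2 he hb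
    have hcont := hg.2.2.2.2.2.2 {y₁, y} ⟨y₁, Set.mem_insert _ _⟩
      (by rintro x (rfl | rfl); exacts [hy₁, hy])
      ⟨y, hy, by rintro x (rfl | rfl); exacts [hy₁y, subset_rfl]⟩
    have h1 : ⋂₀ {y₁, y} = y₁ := by
      rw [Set.sInter_pair]; exact Set.inter_eq_self_of_subset_left hy₁y
    have h2 : g '' {y₁, y} = {g y₁, g y} := Set.image_pair _ _ _
    rw [h1, h2, Set.sInter_pair] at hcont
    have hsub : g y₁ ⊆ g y := fun c hc => (hcont.1 hc).2
    have hgy₁ : C.Config (g y₁) := hg.1 y₁ hy₁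
    set z₁ : Set E'' := z ∩ g y₁ with hz₁def
    have hz₁ : C.Config z₁ := by
      constructor
      · intro X hX hXf
        exact hz.1 X (hX.trans Set.inter_subset_left) hXf
      · intro e e' hle he
        exact ⟨hz.2 hle he.1, hgy₁.2 hle he.2⟩
    have hscott : C.ScottLE z₁ (g y₁) := by
      constructor
      · rintro c ⟨hc, hcpol⟩
        exact ⟨⟨(hs.1 ⟨hsub hc, hcpol⟩).1, hc⟩, hcpol⟩
      · rintro c ⟨hc, hcpol⟩
        exact ⟨hc.2, hcpol⟩
    have hw₁ : (Sum.inl '' y₁ ∪ Sum.inr '' z₁) ∈ affFamily B C g :=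
      ⟨y₁, z₁, hy₁, hz₁, hscott, rfl⟩
    have hw₁sub : (Sum.inl '' y₁ ∪ Sum.inr '' z₁) ⊆ Sum.inl '' y ∪ Sum.inr '' z :=
      Set.union_subset_union (Set.image_mono hy₁y)
        (Set.image_mono Set.inter_subset_left)
    have hbmem : Sum.inl b ∈ Sum.inl '' y₁ ∪ Sum.inr '' z₁ :=
      Or.inl ⟨b, B.le_refl b, rfl⟩
    have := h _ hw₁ hw₁sub hbmem
    rcases this with ⟨a, ha, hae⟩ | ⟨a, _, hae⟩
    · cases hae; exact ha
    · exact absurd hae (by simp)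
  · intro hle w hw hsub hbw
    have hcfg := ((mem_affFamily_iff B C g w).mp hw).1
    have : b' ∈ Sum.inl ⁻¹' w := hcfg.2 hle (show b ∈ Sum.inl ⁻¹' w from hbw)
    exact this

end Aux

/-- Input causality is undisturbed: on a configuration `y ∥ z` of the stable
family of an affine-stable `g : B → C`, the induced causal order between input
events is exactly that of `B`; consequently the first component of `g_!` is
partial rigid. -/
theorem stmt15 {E' : Type v} {E'' : Type w} (B : Game E') (C : Game E'')
    (g : Set E' → Set E'') (hg : IsAffineStable B C g)
    (m : {p : Set (E' ⊕ E'') // IsPrime (affFamily B C g) p} → E' ⊕ E'')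
    (hm : ∀ p, m p ∈ p.1 ∧ p.1 = primeConfig (affFamily B C g) (m p) p.1) :
    (∀ y z, B.Config y → C.Config z → C.ScottLE z (g y) →
      ∀ b ∈ y, ∀ b' ∈ y,
        (belowIn (affFamily B C g) (Sum.inl '' y ∪ Sum.inr '' z)
          (Sum.inl b') (Sum.inl b) ↔ B.le b' b)) ∧
    (∀ p q : {p : Set (E' ⊕ E'') // IsPrime (affFamily B C g) p},
      p.1 ⊆ q.1 → ∀ b b', m p = Sum.inl b' → m q = Sum.inl b → B.le b' b) := by
  have part1 : ∀ y z, B.Config y → C.Config z → C.ScottLE z (g y) →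
      ∀ b ∈ y, ∀ b' ∈ y,
        (belowIn (affFamily B C g) (Sum.inl '' y ∪ Sum.inr '' z)
          (Sum.inl b') (Sum.inl b) ↔ B.le b' b) :=
    fun y z hy hz hs b hb b' hb' => part1_lemma B C g hg hy hz hs hb hb'
  refine ⟨part1, ?_⟩
  intro p q hpq b b' hmp hmq
  obtain ⟨e, x, hxF, hex, hq⟩ := q.2
  have hqF : q.1 ∈ affFamily B C g := by
    rw [hq]; exact primeConfig_mem B C g hg hxF hex
  have hqchar := (mem_affFamily_iff B C g q.1).mp hqF
  have hbq : Sum.inl b ∈ q.1 := by rw [← hmq]; exact (hm q).1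
  have hb'p : Sum.inl b' ∈ p.1 := by rw [← hmp]; exact (hm p).1
  have hbY : b ∈ Sum.inl ⁻¹' q.1 := hbq
  have hb'Y : b' ∈ Sum.inl ⁻¹' q.1 := hpq hb'p
  have hbelow : belowIn (affFamily B C g) q.1 (Sum.inl b') (Sum.inl b) := by
    intro w hwF hwsub hbw
    have hqsub : q.1 ⊆ w := by
      conv_lhs => rw [(hm q).2]
      exact Set.sInter_subset_of_mem ⟨hwF, by rw [hmq]; exact hbw, hwsub⟩
    exact hqsub (hpq hb'p)
  have := (part1 _ _ hqchar.1 hqchar.2.1 hqchar.2.2 b hbY b' hb'Y).mp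
  rw [sum_decomp] at this
  exact this hbelow
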